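/- Let R be a semiring that is additively generated by its set of left invertible elements. Then for any R-module V and any generating set S of V, every summand absorbing submodule W of V is generated by W ∩ S. -/

import Mathlib

def IsSA {R V : Type*} [Semiring R] [AddCommMonoid V] [Module R V]
    (W : Submodule R V) : Prop :=
  ∀ x y : V, x + y ∈ W → x ∈ W ∧ y ∈ W

theorem sa_generated_by_intersection {R : Type*} [Semiring R]
    (hR : AddSubmonoid.closure {x : R | ∃ y : R, y * x = 1} = ⊤)
    {V : Type*} [AddCommMonoid V] [Module R V]
    (S : Set V) (hS : Submodule.span R S = ⊤)
    (W : Submodule R V) (hW : IsSA W) :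
    W = Submodule.span R ((W : Set V) ∩ S) := by
  set U : Set V := {v | ∃ a : R, ∃ s : V, (∃ y : R, y * a = 1) ∧ s ∈ S ∧ v = a • s} with hU
  -- left-invertible scalar multiples stay in the closure of U
  have hA : ∀ a : R, (∃ y : R, y * a = 1) → ∀ x ∈ AddSubmonoid.closure U,
      a • x ∈ AddSubmonoid.closure U := by
    intro a ha x hx
    induction hx using AddSubmonoid.closure_induction with
    | mem v hv =>
      obtain ⟨b, s, ⟨y, hy⟩, hsS, rfl⟩ := hv
      obtain ⟨z, hz⟩ := ha
      refine AddSubmonoid.subset_closure ⟨a * b, s, ⟨y * z, ?_⟩, hsS, smul_smul a b s⟩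
      calc y * z * (a * b) = y * (z * a * b) := by rw [mul_assoc, ← mul_assoc z]
        _ = 1 := by rw [hz, one_mul, hy]
    | zero => simpa using (AddSubmonoid.closure U).zero_mem
    | add p q hp hq ihp ihq => rw [smul_add]; exact (AddSubmonoid.closure U).add_mem ihp ihq
  -- arbitrary scalar multiples stay in the closure of U
  have hB : ∀ c : R, ∀ x ∈ AddSubmonoid.closure U, c • x ∈ AddSubmonoid.closure U := by
    intro c x hx
    have hc : c ∈ AddSubmonoid.closure {x : R | ∃ y : R, y * x = 1} := by
      rw [hR]; trivial
    induction hc using AddSubmonoid.closure_induction with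
    | mem a ha => exact hA a ha x hx
    | zero => simpa using (AddSubmonoid.closure U).zero_mem
    | add p q hp hq ihp ihq => rw [add_smul]; exact (AddSubmonoid.closure U).add_mem ihp ihq
  -- span S ⊆ closure U
  have hspan : ∀ v ∈ Submodule.span R S, v ∈ AddSubmonoid.closure U := by
    intro v hv
    induction hv using Submodule.span_induction with
    | mem s hs => exact AddSubmonoid.subset_closure ⟨1, s, ⟨1, one_mul 1⟩, hs, (one_smul R s).symm⟩
    | zero => exact (AddSubmonoid.closure U).zero_mem
    | add p q hp hq ihp ihq => exact (AddSubmonoid.closure U).add_mem ihp ihq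
    | smul c p hp ihp => exact hB c p ihp
  refine le_antisymm ?_ (Submodule.span_le.2 Set.inter_subset_left)
  intro w hw
  have hwU : w ∈ AddSubmonoid.closure U := hspan w (by rw [hS]; trivial)
  -- induct: x ∈ closure U → x ∈ W → x ∈ span (W ∩ S)
  revert hw
  induction hwU using AddSubmonoid.closure_induction with
  | mem v hv =>
    intro hvW
    obtain ⟨a, s, ⟨y, hy⟩, hsS, rfl⟩ := hv
    have hsW : s ∈ W := by
      have := W.smul_mem y hvW
      rwa [smul_smul, hy, one_smul] at this
    exact Submodule.smul_mem _ a (Submodule.subset_span ⟨hsW, hsS⟩)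
  | zero => intro _; exact (Submodule.span R _).zero_mem
  | add p q hp hq ihp ihq =>
    intro hpq
    obtain ⟨h1, h2⟩ := hW p q hpq
    exact (Submodule.span R _).add_mem (ihp h1) (ihq h2)
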